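/- Fix integers r, m, k with 0 ≤ r ≤ m and 1 ≤ k ≤ m, and let C = RM(r, m+k) ⊆ 𝔽₂^{2^{m+k}}. Then there exist subsets A, B, C' of {0,…,2^{m+k}−1} such that, setting I = {0} ∪ A ∪ B and I' = {0} ∪ A ∪ C', the following hold: I = {0,1,…,2^m − 1}; the punctured codes satisfy C_I = RM(r,m) and C_{I'} = RM(r,m) (coordinates taken in increasing index order, identifying indices with points of 𝔽₂^m via binary expansion); I ∩ I' = {0} ∪ A has cardinality 2^{m−k}; C_{I ∩ I'} = RM(r, m−k); and if X is uniformly distributed on C then X_I and X_{I'} are each uniformly distributed on RM(r,m). -/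

import Mathlib

open MeasureTheory ProbabilityTheory

noncomputable section

/-- The binary entropy function (base 2). -/
def hb (p : ℝ) : ℝ := -(p * Real.logb 2 p) - (1 - p) * Real.logb 2 (1 - p)

/-- Conditional expectation `E[X | W]` of `X` given the σ-algebra generated by `W`. -/
def condMean {Ω β E : Type*} [MeasurableSpace Ω] [MeasurableSpace β]
    [NormedAddCommGroup E] [NormedSpace ℝ E] [CompleteSpace E]
    (μ : Measure Ω) (X : Ω → E) (W : Ω → β) : Ω → E :=
  μ[X | MeasurableSpace.comap W inferInstance]

/-- Bit-error probability of the MAP decision rule for `X ∈ {±1}` given `W`. -/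
def BER {Ω β : Type*} [MeasurableSpace Ω] [MeasurableSpace β]
    (μ : Measure Ω) (X : Ω → ℝ) (W : Ω → β) : ℝ :=
  (1 - ∫ ω, |condMean μ X W ω| ∂μ) / 2

/-- Minimum mean squared error of estimating `X` from `W`. -/
def mmse {Ω β : Type*} [MeasurableSpace Ω] [MeasurableSpace β]
    (μ : Measure Ω) (X : Ω → ℝ) (W : Ω → β) : ℝ :=
  ∫ ω, (X ω - condMean μ X W ω) ^ 2 ∂μ

/-- Uniform distribution on `{-1, 1} ⊆ ℝ`. -/
def signMeasure : Measure ℝ := (2 : ENNReal)⁻¹ • (Measure.dirac (-1) + Measure.dirac 1)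

/-- Capacity of the BMS channel (in multiplicative-noise form) with noise law `PZ`:
`C = 1 - E[h_b((1 + E[X_u | Y_u])/2)]` where `X_u` is uniform on `{±1}`, independent of
`Z₀ ~ PZ`, and `Y_u = X_u · Z₀`. -/
def capacity (PZ : Measure ℝ) : ℝ :=
  1 - ∫ p, hb ((1 + condMean (signMeasure.prod PZ)
        (fun q : ℝ × ℝ => q.1) (fun q : ℝ × ℝ => q.1 * q.2) p) / 2) ∂(signMeasure.prod PZ)

/-- Evaluation vector of the multilinear polynomial whose coefficients on monomials
of degree at most `r` are given by `α` (higher-degree coefficients being ignored),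
evaluated at the point `v ∈ 𝔽₂^m` with index `i = Σ_j v_j 2^j`. -/
def RMword (r m : ℕ) (α : Finset (Fin m) → ZMod 2) : Fin (2 ^ m) → ZMod 2 :=
  fun i => ∑ S ∈ Finset.univ.filter (fun S : Finset (Fin m) => S.card ≤ r),
    α S * ∏ j ∈ S, ((((i : ℕ) / 2 ^ (j : ℕ)) % 2 : ℕ) : ZMod 2)

/-- The Reed–Muller code RM(r, m) ⊆ 𝔽₂^{2^m}. -/
def RMcode (r m : ℕ) : Finset (Fin (2 ^ m) → ZMod 2) :=
  Finset.image (RMword r m) Finset.univ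

/-- The rate `R(r,m)` of RM(r,m). -/
def RMrate (r m : ℕ) : ℝ := (2 ^ m : ℝ)⁻¹ * ∑ i ∈ Finset.range (r + 1), (m.choose i : ℝ)

/-- BPSK modulation map `c ↦ ((-1)^{c_0}, …, (-1)^{c_{N-1}})`. -/
def bpsk {N : ℕ} (c : Fin N → ZMod 2) : Fin N → ℝ := fun i => (-1 : ℝ) ^ ((c i).val)

/-- BPSK image of a binary code. -/
def bpskImage {N : ℕ} (C : Finset (Fin N → ZMod 2)) : Finset (Fin N → ℝ) :=
  letI := Classical.decEq (Fin N → ℝ)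
  C.image bpsk

/-- BPSK image of RM(r,m). -/
def bpskRM (r m : ℕ) : Finset (Fin (2 ^ m) → ℝ) := bpskImage (RMcode r m)

/-- Uniform probability measure on a finite set. -/
def uniformOnFinset {α : Type*} [MeasurableSpace α] (s : Finset α) : Measure α :=
  (s.card : ENNReal)⁻¹ • ∑ x ∈ s, Measure.dirac x

/-- `ρ(m) = (6 ln m + 34)/(5 √m)`. -/
def rho (m : ℕ) : ℝ := (6 * Real.log m + 34) / (5 * Real.sqrt m)

/-- Inverse of the binary entropy function restricted to `[0, 1/2]`. -/
def hbInv (u : ℝ) : ℝ := sSup {p : ℝ | p ∈ Set.Icc (0 : ℝ) (1 / 2) ∧ hb p ≤ u}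

/-- `ψ(u) = 1 - (1 - 2 h_b^{-1}(u))²`. -/
def psi (u : ℝ) : ℝ := 1 - (1 - 2 * hbInv u) ^ 2

/-- `Ψ(u) = ∫₀^u ψ(v) dv`. -/
def PsiInt (u : ℝ) : ℝ := ∫ v in (0 : ℝ)..u, psi v

/-- The coefficients `c_k = 1/(ln 2 · 2k (2k-1))`. -/
def ck (k : ℕ) : ℝ := 1 / (Real.log 2 * (2 * k) * (2 * k - 1))

/-- The channel moments `q_k = E[(E[X_u | Y_u])^{2k}]` for uniform input. -/
def qmom (PZ : Measure ℝ) (k : ℕ) : ℝ :=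
  ∫ p, (condMean (signMeasure.prod PZ)
      (fun q : ℝ × ℝ => q.1) (fun q : ℝ × ℝ => q.1 * q.2) p) ^ (2 * k) ∂(signMeasure.prod PZ)

end

instance : MeasurableSpace (ZMod 2) := ⊤

/-- Puncture a length-`L` code to the coordinates in `I` (of cardinality `n`),
taken in increasing index order. -/
noncomputable def punctSet {L : ℕ} (C : Finset (Fin L → ZMod 2)) {n : ℕ}
    (I : Finset (Fin L)) (h : I.card = n) : Finset (Fin n → ZMod 2) :=
  C.image (fun c => fun j : Fin n => c (I.orderIsoOfFin h j).1)

namespace Stmt7Aux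

/-- Bit-spreading embedding. -/
def Efun (a b d : ℕ) (hab : a ≤ b) (i : Fin (2 ^ (a + d))) : Fin (2 ^ (b + d)) :=
  ⟨(i : ℕ) % 2 ^ a + (i : ℕ) / 2 ^ a * 2 ^ b, by
    have h1 : (i : ℕ) % 2 ^ a < 2 ^ a := Nat.mod_lt _ (Nat.two_pow_pos _)
    have h2 : (i : ℕ) / 2 ^ a < 2 ^ d := by
      apply Nat.div_lt_of_lt_mul
      exact lt_of_lt_of_eq i.isLt (pow_add 2 a d)
    have h3 : 2 ^ a ≤ 2 ^ b := Nat.pow_le_pow_right (by norm_num) hab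
    have h4 : ((i : ℕ) / 2 ^ a + 1) * 2 ^ b ≤ 2 ^ d * 2 ^ b :=
      Nat.mul_le_mul_right _ (Nat.succ_le_of_lt h2)
    calc (i : ℕ) % 2 ^ a + (i : ℕ) / 2 ^ a * 2 ^ b
        < 2 ^ b + (i : ℕ) / 2 ^ a * 2 ^ b := by omega
      _ = ((i : ℕ) / 2 ^ a + 1) * 2 ^ b := by ring
      _ ≤ 2 ^ d * 2 ^ b := h4
      _ = 2 ^ (b + d) := by rw [mul_comm, ← pow_add]⟩

lemma Efun_val (a b d : ℕ) (hab : a ≤ b) (i : Fin (2 ^ (a + d))) :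
    (Efun a b d hab i : ℕ) = (i : ℕ) % 2 ^ a + (i : ℕ) / 2 ^ a * 2 ^ b := rfl

lemma bit_Efun_lt (a b d : ℕ) (hab : a ≤ b) (i : Fin (2 ^ (a + d))) {t : ℕ} (ht : t < a) :
    (Efun a b d hab i : ℕ) / 2 ^ t % 2 = (i : ℕ) / 2 ^ t % 2 := by
  have hb : 2 ^ b = 2 ^ (b - t) * 2 ^ t := by rw [← pow_add]; congr 1; omega
  rw [Efun_val, hb, ← mul_assoc, Nat.add_mul_div_right _ _ (Nat.two_pow_pos t)]
  have h2 : 2 ^ (b - t) = 2 ^ (b - t - 1) * 2 := by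
    rw [← pow_succ]; congr 1; omega
  rw [h2, ← mul_assoc, Nat.add_mul_mod_self_right]
  have ha : 2 ^ a = 2 ^ t * 2 ^ (a - t) := by rw [← pow_add]; congr 1; omega
  rw [ha, Nat.mod_mul_right_div_self]
  exact Nat.mod_mod_of_dvd _ ⟨2 ^ (a - t - 1), by rw [← pow_succ']; congr 1; omega⟩

lemma bit_Efun_mid (a b d : ℕ) (hab : a ≤ b) (i : Fin (2 ^ (a + d))) {t : ℕ}
    (ht1 : a ≤ t) (ht2 : t < b) :
    (Efun a b d hab i : ℕ) / 2 ^ t % 2 = 0 := by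
  have hb : 2 ^ b = 2 ^ (b - t) * 2 ^ t := by rw [← pow_add]; congr 1; omega
  have hlow : (i : ℕ) % 2 ^ a / 2 ^ t = 0 := by
    apply Nat.div_eq_of_lt
    calc (i : ℕ) % 2 ^ a < 2 ^ a := Nat.mod_lt _ (Nat.two_pow_pos _)
      _ ≤ 2 ^ t := Nat.pow_le_pow_right (by norm_num) ht1
  rw [Efun_val, hb, ← mul_assoc, Nat.add_mul_div_right _ _ (Nat.two_pow_pos t),
    hlow, zero_add]
  have h2 : 2 ^ (b - t) = 2 ^ (b - t - 1) * 2 := by rw [← pow_succ]; congr 1; omega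
  rw [h2, ← mul_assoc, Nat.mul_mod_left]

lemma bit_Efun_ge (a b d : ℕ) (hab : a ≤ b) (i : Fin (2 ^ (a + d))) (u : ℕ) :
    (Efun a b d hab i : ℕ) / 2 ^ (b + u) % 2 = (i : ℕ) / 2 ^ (a + u) % 2 := by
  have h1 : (Efun a b d hab i : ℕ) / 2 ^ b = (i : ℕ) / 2 ^ a := by
    rw [Efun_val, Nat.add_mul_div_right _ _ (Nat.two_pow_pos b)]
    have : (i : ℕ) % 2 ^ a / 2 ^ b = 0 := by
      apply Nat.div_eq_of_lt
      calc (i : ℕ) % 2 ^ a < 2 ^ a := Nat.mod_lt _ (Nat.two_pow_pos _)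
        _ ≤ 2 ^ b := Nat.pow_le_pow_right (by norm_num) hab
    rw [this, zero_add]
  rw [pow_add 2 b u, ← Nat.div_div_eq_div_mul, h1, Nat.div_div_eq_div_mul, ← pow_add]

lemma mono_aux (A B q r q' r' : ℕ) (hA : A ≤ B) (hr : r < A) (hr' : r' < A)
    (h : A * q + r < A * q' + r') : r + q * B < r' + q' * B := by
  rcases Nat.lt_or_ge q q' with hq | hq
  · have h4 : (q + 1) * B ≤ q' * B := Nat.mul_le_mul_right _ (Nat.succ_le_of_lt hq)
    rw [add_mul, one_mul] at h4
    omega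
  · have h5 : A * q' ≤ A * q := Nat.mul_le_mul_left _ hq
    have hq2 : q = q' := by nlinarith
    subst hq2
    have : r < r' := by omega
    omega

lemma Efun_strictMono (a b d : ℕ) (hab : a ≤ b) : StrictMono (Efun a b d hab) := by
  intro i i' h
  show (Efun a b d hab i : ℕ) < (Efun a b d hab i' : ℕ)
  rw [Efun_val, Efun_val]
  have hm : (i : ℕ) % 2 ^ a < 2 ^ a := Nat.mod_lt _ (Nat.two_pow_pos _)
  have hm' : (i' : ℕ) % 2 ^ a < 2 ^ a := Nat.mod_lt _ (Nat.two_pow_pos _)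
  have h3 : 2 ^ a ≤ 2 ^ b := Nat.pow_le_pow_right (by norm_num) hab
  apply mono_aux _ _ _ _ _ _ h3 hm hm'
  rw [Nat.div_add_mod, Nat.div_add_mod]
  exact h

lemma Efun_injective (a b d : ℕ) (hab : a ≤ b) : Function.Injective (Efun a b d hab) :=
  (Efun_strictMono a b d hab).injective

/-- The index set: image of the embedding. -/
def Iset (a b d : ℕ) (hab : a ≤ b) : Finset (Fin (2 ^ (b + d))) :=
  Finset.image (Efun a b d hab) Finset.univ

lemma card_Iset (a b d : ℕ) (hab : a ≤ b) : (Iset a b d hab).card = 2 ^ (a + d) := by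
  rw [Iset, Finset.card_image_of_injective _ (Efun_injective a b d hab), Finset.card_univ,
    Fintype.card_fin]

lemma orderIso_Iset (a b d : ℕ) (hab : a ≤ b) (h : (Iset a b d hab).card = 2 ^ (a + d))
    (j : Fin (2 ^ (a + d))) :
    (((Iset a b d hab).orderIsoOfFin h j : Fin (2 ^ (b + d)))) = Efun a b d hab j := by
  have := Finset.orderEmbOfFin_unique h (f := Efun a b d hab)
    (fun x => Finset.mem_image_of_mem _ (Finset.mem_univ x)) (Efun_strictMono a b d hab)
  rw [Finset.coe_orderIsoOfFin_apply, ← this]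

end Stmt7Aux

namespace Stmt7Aux2
open Stmt7Aux

/-- Position map on variable indices. -/
def posMap (a b d : ℕ) (hab : a ≤ b) (j : Fin (a + d)) : Fin (b + d) :=
  if h : (j : ℕ) < a then ⟨j, by omega⟩ else ⟨(j : ℕ) + (b - a), by have := j.isLt; omega⟩

lemma posMap_val_lt (a b d : ℕ) (hab : a ≤ b) (j : Fin (a + d)) (h : (j : ℕ) < a) :
    ((posMap a b d hab j : Fin (b + d)) : ℕ) = (j : ℕ) := by
  unfold posMap; rw [dif_pos h]

lemma posMap_val_ge (a b d : ℕ) (hab : a ≤ b) (j : Fin (a + d)) (h : a ≤ (j : ℕ)) :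
    ((posMap a b d hab j : Fin (b + d)) : ℕ) = (j : ℕ) + (b - a) := by
  unfold posMap; rw [dif_neg (by omega)]

lemma posMap_good (a b d : ℕ) (hab : a ≤ b) (j : Fin (a + d)) :
    ((posMap a b d hab j : Fin (b + d)) : ℕ) < a ∨ b ≤ ((posMap a b d hab j : Fin (b + d)) : ℕ) := by
  rcases lt_or_ge (j : ℕ) a with h | h
  · left; rw [posMap_val_lt a b d hab j h]; exact h
  · right; rw [posMap_val_ge a b d hab j h]; omega

/-- Dependent inverse of `posMap`, defined on good positions. -/
def posInvD (a b d : ℕ) (hab : a ≤ b) (t : Fin (b + d))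
    (ht : (t : ℕ) < a ∨ b ≤ (t : ℕ)) : Fin (a + d) :=
  if h : (t : ℕ) < a then ⟨t, by omega⟩ else ⟨(t : ℕ) - (b - a), by have := t.isLt; omega⟩

lemma posInvD_posMap (a b d : ℕ) (hab : a ≤ b) (j : Fin (a + d)) (h) :
    posInvD a b d hab (posMap a b d hab j) h = j := by
  rcases lt_or_ge (j : ℕ) a with hj | hj
  · apply Fin.ext
    unfold posInvD
    rw [dif_pos (by rw [posMap_val_lt a b d hab j hj]; exact hj)]
    exact posMap_val_lt a b d hab j hj
  · apply Fin.ext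
    unfold posInvD
    rw [dif_neg (by rw [posMap_val_ge a b d hab j hj]; omega)]
    simp only [posMap_val_ge a b d hab j hj]
    omega

lemma posMap_posInvD (a b d : ℕ) (hab : a ≤ b) (t : Fin (b + d))
    (ht : (t : ℕ) < a ∨ b ≤ (t : ℕ)) :
    posMap a b d hab (posInvD a b d hab t ht) = t := by
  rcases lt_or_ge (t : ℕ) a with h | h
  · apply Fin.ext
    unfold posInvD
    rw [dif_pos h]
    exact posMap_val_lt a b d hab _ h
  · have hb : b ≤ (t : ℕ) := by omega
    apply Fin.ext
    unfold posInvD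
    rw [dif_neg (by omega)]
    rw [posMap_val_ge a b d hab _ (by simp only []; omega)]
    simp only []
    omega

lemma posMap_injective (a b d : ℕ) (hab : a ≤ b) : Function.Injective (posMap a b d hab) := by
  intro x y hxy
  have hcong : ∀ (t t' : Fin (b + d)) (h : (t : ℕ) < a ∨ b ≤ (t : ℕ))
      (h' : (t' : ℕ) < a ∨ b ≤ (t' : ℕ)), t = t' →
      posInvD a b d hab t h = posInvD a b d hab t' h' := by
    rintro t _ h h' rfl; rfl
  rw [← posInvD_posMap a b d hab x (posMap_good a b d hab x),
    ← posInvD_posMap a b d hab y (posMap_good a b d hab y)]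
  exact hcong _ _ _ _ hxy

lemma bit_compat (a b d : ℕ) (hab : a ≤ b) (i : Fin (2 ^ (a + d))) (t : Fin (a + d)) :
    (Efun a b d hab i : ℕ) / 2 ^ ((posMap a b d hab t : Fin (b + d)) : ℕ) % 2
      = (i : ℕ) / 2 ^ (t : ℕ) % 2 := by
  rcases lt_or_ge (t : ℕ) a with h | h
  · rw [posMap_val_lt a b d hab t h]
    exact bit_Efun_lt a b d hab i h
  · rw [posMap_val_ge a b d hab t h,
      show (t : ℕ) + (b - a) = b + ((t : ℕ) - a) from by omega,
      bit_Efun_ge a b d hab i ((t : ℕ) - a),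
      show a + ((t : ℕ) - a) = (t : ℕ) from by omega]

lemma mem_Iset (a b d : ℕ) (hab : a ≤ b) (x : Fin (2 ^ (b + d))) :
    x ∈ Iset a b d hab ↔ (x : ℕ) % 2 ^ b < 2 ^ a := by
  constructor
  · rintro hx
    rw [Iset, Finset.mem_image] at hx
    obtain ⟨i, _, rfl⟩ := hx
    rw [Efun_val, Nat.add_mul_mod_self_right]
    calc (i : ℕ) % 2 ^ a % 2 ^ b ≤ (i : ℕ) % 2 ^ a := Nat.mod_le _ _
      _ < 2 ^ a := Nat.mod_lt _ (Nat.two_pow_pos _)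
  · intro hx
    have hdiv : (x : ℕ) / 2 ^ b < 2 ^ d := by
      apply Nat.div_lt_of_lt_mul
      exact lt_of_lt_of_eq x.isLt (pow_add 2 b d)
    have h3 : 2 ^ a ≤ 2 ^ b := Nat.pow_le_pow_right (by norm_num) hab
    have hibound : (x : ℕ) % 2 ^ b + (x : ℕ) / 2 ^ b * 2 ^ a < 2 ^ (a + d) := by
      have h4 : ((x : ℕ) / 2 ^ b + 1) * 2 ^ a ≤ 2 ^ d * 2 ^ a :=
        Nat.mul_le_mul_right _ (Nat.succ_le_of_lt hdiv)
      calc (x : ℕ) % 2 ^ b + (x : ℕ) / 2 ^ b * 2 ^ a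
          < 2 ^ a + (x : ℕ) / 2 ^ b * 2 ^ a := by omega
        _ = ((x : ℕ) / 2 ^ b + 1) * 2 ^ a := by ring
        _ ≤ 2 ^ d * 2 ^ a := h4
        _ = 2 ^ (a + d) := by rw [mul_comm, ← pow_add]
    rw [Iset, Finset.mem_image]
    refine ⟨⟨(x : ℕ) % 2 ^ b + (x : ℕ) / 2 ^ b * 2 ^ a, hibound⟩, Finset.mem_univ _, ?_⟩
    apply Fin.ext
    rw [Efun_val]
    have hpos : 0 < 2 ^ a := Nat.two_pow_pos _
    simp only []
    rw [Nat.add_mul_mod_self_right, Nat.mod_eq_of_lt hx,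
      Nat.add_mul_div_right _ _ hpos, Nat.div_eq_of_lt hx, zero_add,
      Nat.mod_add_div' (x : ℕ) (2 ^ b)]

lemma mem_Iset_d0 (a b : ℕ) (hab : a ≤ b) (x : Fin (2 ^ (b + 0))) :
    x ∈ Iset a b 0 hab ↔ (x : ℕ) < 2 ^ a := by
  rw [mem_Iset]
  have hxb : (x : ℕ) < 2 ^ b := lt_of_lt_of_eq x.isLt (by norm_num)
  rw [Nat.mod_eq_of_lt hxb]

/-- Whether a monomial (subset of positions) only uses good positions. -/
def goodSet (a b d : ℕ) (S : Finset (Fin (b + d))) : Prop :=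
  ∀ t ∈ S, (t : ℕ) < a ∨ b ≤ (t : ℕ)

instance (a b d : ℕ) (S : Finset (Fin (b + d))) : Decidable (goodSet a b d S) := by
  unfold goodSet; infer_instance

/-- The embedding version of posMap. -/
def posEmb (a b d : ℕ) (hab : a ≤ b) : Fin (a + d) ↪ Fin (b + d) :=
  ⟨posMap a b d hab, posMap_injective a b d hab⟩

/-- Inverse image of a good set. -/
def invSet (a b d : ℕ) (hab : a ≤ b) (S : Finset (Fin (b + d)))
    (h : goodSet a b d S) : Finset (Fin (a + d)) :=
  S.attach.image (fun t => posInvD a b d hab t.1 (h t.1 t.2))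

lemma map_invSet (a b d : ℕ) (hab : a ≤ b) (S : Finset (Fin (b + d)))
    (h : goodSet a b d S) : (invSet a b d hab S h).map (posEmb a b d hab) = S := by
  ext x
  simp only [invSet, Finset.mem_map, Finset.mem_image, Finset.mem_attach, true_and,
    Subtype.exists, posEmb, Function.Embedding.coeFn_mk]
  constructor
  · rintro ⟨y, ⟨t, ht, rfl⟩, rfl⟩
    rw [posMap_posInvD a b d hab t (h t ht)]
    exact ht
  · intro hx
    exact ⟨posInvD a b d hab x (h x hx), ⟨x, hx, rfl⟩, posMap_posInvD a b d hab x (h x hx)⟩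

lemma goodSet_map (a b d : ℕ) (hab : a ≤ b) (T : Finset (Fin (a + d))) :
    goodSet a b d (T.map (posEmb a b d hab)) := by
  intro t ht
  rw [Finset.mem_map] at ht
  obtain ⟨j, _, rfl⟩ := ht
  exact posMap_good a b d hab j

lemma invSet_map (a b d : ℕ) (hab : a ≤ b) (T : Finset (Fin (a + d))) (h) :
    invSet a b d hab (T.map (posEmb a b d hab)) h = T := by
  ext x
  simp only [invSet, Finset.mem_image, Finset.mem_attach, true_and, Subtype.exists]
  constructor
  · rintro ⟨t, ht, rfl⟩
    rw [Finset.mem_map] at ht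
    obtain ⟨j, hj, rfl⟩ := ht
    exact (posInvD_posMap a b d hab j _).symm ▸ hj
  · intro hx
    refine ⟨posMap a b d hab x, Finset.mem_map_of_mem _ hx, ?_⟩
    rw [posInvD_posMap]

lemma card_invSet (a b d : ℕ) (hab : a ≤ b) (S : Finset (Fin (b + d))) (h) :
    (invSet a b d hab S h).card = S.card := by
  have h1 : ((invSet a b d hab S h).map (posEmb a b d hab)).card
      = (invSet a b d hab S h).card := Finset.card_map _
  rw [map_invSet] at h1
  exact h1.symm

end Stmt7Aux2

namespace Stmt7Aux3
open Stmt7Aux Stmt7Aux2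

/-- Pullback of coefficients along the position map. -/
def pull (r a b d : ℕ) (hab : a ≤ b) (α : Finset (Fin (b + d)) → ZMod 2) :
    Finset (Fin (a + d)) → ZMod 2 :=
  fun T => α (T.map (posEmb a b d hab))

lemma pull_surjective (r a b d : ℕ) (hab : a ≤ b) :
    Function.Surjective (pull r a b d hab) := by
  intro β
  refine ⟨fun S => if h : goodSet a b d S then β (invSet a b d hab S h) else 0, funext fun T => ?_⟩
  rw [pull, dif_pos (goodSet_map a b d hab T), invSet_map]

lemma RMword_Efun (r a b d : ℕ) (hab : a ≤ b) (α : Finset (Fin (b + d)) → ZMod 2)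
    (i : Fin (2 ^ (a + d))) :
    RMword r (b + d) α (Efun a b d hab i) = RMword r (a + d) (pull r a b d hab α) i := by
  unfold RMword
  rw [← Finset.sum_filter_add_sum_filter_not
    (Finset.univ.filter (fun S : Finset (Fin (b + d)) => S.card ≤ r)) (goodSet a b d)]
  have hzero : ∑ S ∈ (Finset.univ.filter (fun S : Finset (Fin (b + d)) => S.card ≤ r)).filter
      (fun S => ¬ goodSet a b d S),
      α S * ∏ j ∈ S, ((((Efun a b d hab i : ℕ) / 2 ^ (j : ℕ)) % 2 : ℕ) : ZMod 2) = 0 := by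
    apply Finset.sum_eq_zero
    intro S hS
    rw [Finset.mem_filter] at hS
    obtain ⟨t, ht, hbad⟩ := by
      have := hS.2
      unfold goodSet at this
      push_neg at this
      exact this
    have hmid : (Efun a b d hab i : ℕ) / 2 ^ (t : ℕ) % 2 = 0 :=
      bit_Efun_mid a b d hab i (by omega) (by omega)
    have : (∏ j ∈ S, ((((Efun a b d hab i : ℕ) / 2 ^ (j : ℕ)) % 2 : ℕ) : ZMod 2)) = 0 := by
      apply Finset.prod_eq_zero ht
      rw [hmid]
      norm_num
    rw [this, mul_zero]
  rw [hzero, add_zero]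
  -- identify good sets with images of sets downstairs
  have himg : (Finset.univ.filter (fun S : Finset (Fin (b + d)) => S.card ≤ r)).filter
        (goodSet a b d)
      = (Finset.univ.filter (fun T : Finset (Fin (a + d)) => T.card ≤ r)).image
        (fun T => T.map (posEmb a b d hab)) := by
    ext S
    simp only [Finset.mem_filter, Finset.mem_image, Finset.mem_univ, true_and]
    constructor
    · rintro ⟨hcard, hgood⟩
      refine ⟨invSet a b d hab S hgood, ?_, map_invSet a b d hab S hgood⟩
      rw [card_invSet]; exact hcard
    · rintro ⟨T, hT, rfl⟩
      exact ⟨by rw [Finset.card_map]; exact hT, goodSet_map a b d hab T⟩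
  rw [himg, Finset.sum_image (by
    intro x _ y _ hxy
    exact Finset.map_injective _ hxy)]
  apply Finset.sum_congr rfl
  intro T hT
  rw [pull]
  congr 1
  rw [Finset.prod_map]
  apply Finset.prod_congr rfl
  intro t _
  show ((((Efun a b d hab i : ℕ) / 2 ^ ((posMap a b d hab t : Fin (b+d)) : ℕ)) % 2 : ℕ) : ZMod 2) = _
  rw [bit_compat a b d hab i t]

end Stmt7Aux3

namespace Stmt7Aux4
open Stmt7Aux Stmt7Aux2 Stmt7Aux3

lemma punct_fun_eq (r a b d : ℕ) (hab : a ≤ b) (h : (Iset a b d hab).card = 2 ^ (a + d))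
    (α : Finset (Fin (b + d)) → ZMod 2) :
    (fun j : Fin (2 ^ (a + d)) => RMword r (b + d) α ((Iset a b d hab).orderIsoOfFin h j).1)
      = RMword r (a + d) (pull r a b d hab α) := by
  funext j
  rw [orderIso_Iset a b d hab h j, RMword_Efun r a b d hab α j]

lemma punct_RM (r a b d : ℕ) (hab : a ≤ b) (I : Finset (Fin (2 ^ (b + d))))
    (hIeq : I = Iset a b d hab) (h : I.card = 2 ^ (a + d)) :
    punctSet (RMcode r (b + d)) I h = RMcode r (a + d) := by
  subst hIeq
  unfold punctSet RMcode
  rw [Finset.image_image]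
  have hfe : ((fun c : Fin (2 ^ (b + d)) → ZMod 2 =>
        fun j : Fin (2 ^ (a + d)) => c ((Iset a b d hab).orderIsoOfFin h j).1)
      ∘ RMword r (b + d)) = RMword r (a + d) ∘ pull r a b d hab := by
    funext α
    exact punct_fun_eq r a b d hab h α
  rw [hfe, ← Finset.image_image]
  congr 1
  exact Finset.image_univ_of_surjective (pull_surjective r a b d hab)

open MeasureTheory

lemma map_dirac_sum {V W : Type*} [MeasurableSpace V] [MeasurableSpace W]
    (f : V → W) (hf : Measurable f) (s : Finset V) :
    MeasureTheory.Measure.map f (∑ x ∈ s, MeasureTheory.Measure.dirac x)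
      = ∑ x ∈ s, MeasureTheory.Measure.dirac (f x) := by
  classical
  induction s using Finset.induction_on with
  | empty => simp
  | insert _ _ hx ih =>
    rw [Finset.sum_insert hx, Finset.sum_insert hx, MeasureTheory.Measure.map_add _ _ hf,
      MeasureTheory.Measure.map_dirac' hf, ih]

lemma map_uniform {V W : Type*} [MeasurableSpace V] [MeasurableSpace W] [DecidableEq W]
    (f : V → W) (hf : Measurable f) (s : Finset V) (hne : s.Nonempty)
    (hfib : ∀ x ∈ s, ∀ y ∈ s,
      (s.filter fun z => f z = f x).card = (s.filter fun z => f z = f y).card) :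
    Measure.map f (uniformOnFinset s) = uniformOnFinset (s.image f) := by
  obtain ⟨x₀, hx₀⟩ := hne
  set n := (s.filter fun z => f z = f x₀).card with hn_def
  have hn : 0 < n := Finset.card_pos.mpr ⟨x₀, Finset.mem_filter.mpr ⟨hx₀, rfl⟩⟩
  have hfib' : ∀ y ∈ s.image f, (s.filter fun z => f z = y).card = n := by
    intro y hy
    rw [Finset.mem_image] at hy
    obtain ⟨x, hx, rfl⟩ := hy
    exact hfib x hx x₀ hx₀
  have hcard : s.card = (s.image f).card * n := by
    have h1 : ∑ y ∈ s.image f, ∑ x ∈ s.filter (fun z => f z = y), (1 : ℕ) = ∑ x ∈ s, 1 :=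
      Finset.sum_fiberwise_of_maps_to (fun x hx => Finset.mem_image_of_mem f hx) _
    simp only [Finset.sum_const, smul_eq_mul, mul_one] at h1
    rw [← h1]
    rw [Finset.sum_congr rfl (fun y hy => by rw [hfib' y hy])]
    rw [Finset.sum_const, smul_eq_mul]
  have hmap_sum : Measure.map f (∑ x ∈ s, Measure.dirac x) = ∑ x ∈ s, Measure.dirac (f x) :=
    map_dirac_sum f hf s
  unfold uniformOnFinset
  have hsum2 : (∑ x ∈ s, Measure.dirac (f x))
      = ∑ y ∈ s.image f, (n : ENNReal) • Measure.dirac y := by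
    rw [← Finset.sum_fiberwise_of_maps_to (fun x hx => Finset.mem_image_of_mem f hx)
      (fun x => Measure.dirac (f x))]
    apply Finset.sum_congr rfl
    intro y hy
    rw [Finset.sum_congr rfl (fun x hx => by
      rw [(Finset.mem_filter.mp hx).2])]
    rw [Finset.sum_const, hfib' y hy]
    rw [← Nat.cast_smul_eq_nsmul ENNReal]
  rw [Measure.map_smul, hmap_sum, hsum2]
  have hscal : ∀ y : W, ((s.card : ENNReal))⁻¹ • (n : ENNReal) • Measure.dirac y
      = ((s.image f).card : ENNReal)⁻¹ • Measure.dirac y := by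
    intro y
    rw [smul_smul]
    congr 1
    rw [hcard]
    push_cast
    rw [ENNReal.mul_inv (Or.inr (ENNReal.natCast_ne_top _)) (Or.inl (ENNReal.natCast_ne_top _))]
    rw [mul_assoc, ENNReal.inv_mul_cancel (by exact_mod_cast hn.ne') (ENNReal.natCast_ne_top _),
      mul_one]
  calc ((s.card : ENNReal))⁻¹ • ∑ y ∈ s.image f, (n : ENNReal) • Measure.dirac y
      = ∑ x ∈ s.image f, ((s.card : ENNReal))⁻¹ • (n : ENNReal) • Measure.dirac x :=
        Finset.smul_sum
    _ = ∑ x ∈ s.image f, (((s.image f).card : ENNReal))⁻¹ • Measure.dirac x :=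
        Finset.sum_congr rfl (fun y _ => hscal y)
    _ = (((s.image f).card : ENNReal))⁻¹ • ∑ x ∈ s.image f, Measure.dirac x :=
        (Finset.smul_sum).symm

end Stmt7Aux4

namespace Stmt7Aux5
open Stmt7Aux Stmt7Aux2 Stmt7Aux3 Stmt7Aux4 MeasureTheory

lemma RMword_add (r m : ℕ) (α β : Finset (Fin m) → ZMod 2) :
    RMword r m (α + β) = RMword r m α + RMword r m β := by
  funext i
  show RMword r m (α + β) i = RMword r m α i + RMword r m β i
  unfold RMword
  rw [← Finset.sum_add_distrib]
  apply Finset.sum_congr rfl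
  intro S _
  show (α S + β S) * _ = _
  rw [add_mul]

lemma RMcode_add_mem (r m : ℕ) {u v : Fin (2 ^ m) → ZMod 2}
    (hu : u ∈ RMcode r m) (hv : v ∈ RMcode r m) : u + v ∈ RMcode r m := by
  rw [RMcode, Finset.mem_image] at hu hv ⊢
  obtain ⟨α, _, rfl⟩ := hu
  obtain ⟨β, _, rfl⟩ := hv
  exact ⟨α + β, Finset.mem_univ _, RMword_add r m α β⟩

lemma RMcode_nonempty (r m : ℕ) : (RMcode r m).Nonempty :=
  ⟨RMword r m 0, Finset.mem_image_of_mem _ (Finset.mem_univ _)⟩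

lemma fib_const {V W : Type*} [AddCommMonoid V] [AddCommMonoid W] [DecidableEq W]
    (f : V → W) (hf : ∀ u v, f (u + v) = f u + f v)
    (hV : ∀ v : V, v + v = 0) (hW : ∀ w : W, w + w = 0)
    (s : Finset V) (hs : ∀ u ∈ s, ∀ v ∈ s, u + v ∈ s) :
    ∀ x ∈ s, ∀ y ∈ s,
      (s.filter fun z => f z = f x).card = (s.filter fun z => f z = f y).card := by
  have key : ∀ x ∈ s, ∀ y ∈ s,
      (s.filter fun z => f z = f x).card ≤ (s.filter fun z => f z = f y).card := by
    intro x hx y hy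
    apply Finset.card_le_card_of_injOn (fun z => z + (x + y))
    · intro z hz
      rw [Finset.mem_coe, Finset.mem_filter] at hz ⊢
      refine ⟨hs z hz.1 _ (hs x hx y hy), ?_⟩
      rw [hf, hf, hz.2]
      rw [show f x + (f x + f y) = (f x + f x) + f y from (add_assoc _ _ _).symm, hW, zero_add]
    · intro z1 _ z2 _ h12
      have : z1 + (x + y) + (x + y) = z2 + (x + y) + (x + y) := by
        simp only [] at h12
        rw [h12]
      rwa [add_assoc, hV, add_zero, add_assoc, hV, add_zero] at this
  intro x hx y hy
  exact le_antisymm (key x hx y hy) (key y hy x hx)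

lemma measurable_punct {L n : ℕ} (g : Fin n → Fin L) :
    Measurable (fun c : Fin L → ZMod 2 => fun j : Fin n => c (g j)) :=
  measurable_pi_lambda _ (fun j => measurable_pi_apply _)

/-- Main pushforward lemma specialised to RM codes and puncture maps. -/
lemma map_uniform_RM (r a b d : ℕ) (hab : a ≤ b) (I : Finset (Fin (2 ^ (b + d))))
    (hIeq : I = Iset a b d hab) (h : I.card = 2 ^ (a + d)) :
    Measure.map (fun c : Fin (2 ^ (b + d)) → ZMod 2 => fun j : Fin (2 ^ (a + d)) =>
        c ((I.orderIsoOfFin h j).1)) (uniformOnFinset (RMcode r (b + d)))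
      = uniformOnFinset (RMcode r (a + d)) := by
  classical
  have hmeas : Measurable (fun c : Fin (2 ^ (b + d)) → ZMod 2 => fun j : Fin (2 ^ (a + d)) =>
      c ((I.orderIsoOfFin h j).1)) := measurable_punct _
  have hchar2 : ∀ (n : ℕ) (w : Fin n → ZMod 2), w + w = 0 := by
    intro n w
    funext j
    exact CharTwo.add_self_eq_zero _
  have hadd : ∀ u v : Fin (2 ^ (b + d)) → ZMod 2,
      (fun j : Fin (2 ^ (a + d)) => (u + v) ((I.orderIsoOfFin h j).1))
        = (fun j => u ((I.orderIsoOfFin h j).1)) + (fun j => v ((I.orderIsoOfFin h j).1)) := by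
    intro u v; rfl
  rw [map_uniform _ hmeas _ (RMcode_nonempty r (b + d))
    (fib_const _ hadd (hchar2 _) (hchar2 _) _ (fun u hu v hv => RMcode_add_mem r (b + d) hu hv))]
  congr 1
  exact punct_RM r a b d hab I hIeq h

end Stmt7Aux5

/-- nesting property of RM codes: inside RM(r, m+k) there are two
puncturing patterns `I = {0} ∪ A ∪ B = {0,…,2^m−1}` and `I' = {0} ∪ A ∪ C'` both of
which yield RM(r,m), whose intersection `{0} ∪ A` has cardinality `2^{m−k}` and yields
RM(r, m−k), and the uniform distribution on RM(r,m+k) induces the uniform distribution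
on both punctured codes. -/
theorem stmt_7 (r m k : ℕ) (hrm : r ≤ m) (hk1 : 1 ≤ k) (hkm : k ≤ m) :
    ∃ (A B C' : Finset (Fin (2 ^ (m + k))))
      (hI : (insert (0 : Fin (2 ^ (m + k))) (A ∪ B)).card = 2 ^ m)
      (hI' : (insert (0 : Fin (2 ^ (m + k))) (A ∪ C')).card = 2 ^ m)
      (hT : ((insert (0 : Fin (2 ^ (m + k))) (A ∪ B))
              ∩ (insert (0 : Fin (2 ^ (m + k))) (A ∪ C'))).card = 2 ^ (m - k)),
      (∀ x : Fin (2 ^ (m + k)),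
          x ∈ insert (0 : Fin (2 ^ (m + k))) (A ∪ B) ↔ (x : ℕ) < 2 ^ m)
      ∧ punctSet (RMcode r (m + k)) (insert (0 : Fin (2 ^ (m + k))) (A ∪ B)) hI
          = RMcode r m
      ∧ punctSet (RMcode r (m + k)) (insert (0 : Fin (2 ^ (m + k))) (A ∪ C')) hI'
          = RMcode r m
      ∧ (insert (0 : Fin (2 ^ (m + k))) (A ∪ B))
            ∩ (insert (0 : Fin (2 ^ (m + k))) (A ∪ C'))
          = insert (0 : Fin (2 ^ (m + k))) A
      ∧ punctSet (RMcode r (m + k))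
            ((insert (0 : Fin (2 ^ (m + k))) (A ∪ B))
              ∩ (insert (0 : Fin (2 ^ (m + k))) (A ∪ C'))) hT
          = RMcode r (m - k)
      ∧ Measure.map
            (fun c : Fin (2 ^ (m + k)) → ZMod 2 => fun j : Fin (2 ^ m) =>
              c (((insert (0 : Fin (2 ^ (m + k))) (A ∪ B)).orderIsoOfFin hI j).1))
            (uniformOnFinset (RMcode r (m + k)))
          = uniformOnFinset (RMcode r m)
      ∧ Measure.map
            (fun c : Fin (2 ^ (m + k)) → ZMod 2 => fun j : Fin (2 ^ m) =>
              c (((insert (0 : Fin (2 ^ (m + k))) (A ∪ C')).orderIsoOfFin hI' j).1))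
            (uniformOnFinset (RMcode r (m + k)))
          = uniformOnFinset (RMcode r m) := by
  classical
  open Stmt7Aux Stmt7Aux2 Stmt7Aux3 Stmt7Aux4 Stmt7Aux5 in
  obtain ⟨m', rfl⟩ : ∃ m', m = m' + k := ⟨m - k, by omega⟩
  have hsub : m' + k - k = m' := by omega
  rw [hsub]
  have hab1 : m' + k ≤ m' + k + k := by omega
  have hab2 : m' ≤ m' + k := by omega
  have hab3 : m' ≤ m' + k + k := by omega
  have p0 : 0 < (2 : ℕ) ^ m' := Nat.two_pow_pos _
  have p1 : (2 : ℕ) ^ m' ≤ 2 ^ (m' + k) := Nat.pow_le_pow_right (by norm_num) (by omega)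
  have p2 : (2 : ℕ) ^ (m' + k) ≤ 2 ^ (m' + k + k) := Nat.pow_le_pow_right (by norm_num) (by omega)
  set A : Finset (Fin (2 ^ (m' + k + k))) :=
    (Finset.univ.filter (fun x : Fin (2 ^ (m' + k + k)) => (x : ℕ) < 2 ^ m')).erase 0 with hA
  set B : Finset (Fin (2 ^ (m' + k + k))) :=
    Finset.univ.filter (fun x : Fin (2 ^ (m' + k + k)) =>
      (x : ℕ) < 2 ^ (m' + k) ∧ 2 ^ m' ≤ (x : ℕ)) with hB
  set C' : Finset (Fin (2 ^ (m' + k + k))) :=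
    Finset.univ.filter (fun x : Fin (2 ^ (m' + k + k)) =>
      (x : ℕ) % 2 ^ (m' + k) < 2 ^ m' ∧ 2 ^ (m' + k) ≤ (x : ℕ)) with hC
  have hval0 : ((0 : Fin (2 ^ (m' + k + k))) : ℕ) = 0 := rfl
  have hmem1 : ∀ x : Fin (2 ^ (m' + k + k)),
      x ∈ insert (0 : Fin (2 ^ (m' + k + k))) (A ∪ B) ↔ (x : ℕ) < 2 ^ (m' + k) := by
    intro x
    simp only [hA, hB, Finset.mem_insert, Finset.mem_union, Finset.mem_erase, Finset.mem_filter,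
      Finset.mem_univ, true_and, Fin.ext_iff, hval0]
    omega
  have hmem2 : ∀ x : Fin (2 ^ (m' + k + k)),
      x ∈ insert (0 : Fin (2 ^ (m' + k + k))) (A ∪ C') ↔
        (x : ℕ) % 2 ^ (m' + k) < 2 ^ m' := by
    intro x
    simp only [hA, hC, Finset.mem_insert, Finset.mem_union, Finset.mem_erase, Finset.mem_filter,
      Finset.mem_univ, true_and, Fin.ext_iff, hval0]
    rcases lt_or_ge (x : ℕ) (2 ^ (m' + k)) with hx | hx
    · rw [Nat.mod_eq_of_lt hx]; omega
    · have := Nat.mod_lt (x : ℕ) (show 0 < 2 ^ (m' + k) by omega)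
      omega
  have hmemA : ∀ x : Fin (2 ^ (m' + k + k)),
      x ∈ insert (0 : Fin (2 ^ (m' + k + k))) A ↔ (x : ℕ) < 2 ^ m' := by
    intro x
    simp only [hA, Finset.mem_insert, Finset.mem_erase, Finset.mem_filter,
      Finset.mem_univ, true_and, Fin.ext_iff, hval0]
    omega
  have hEq1 : insert (0 : Fin (2 ^ (m' + k + k))) (A ∪ B)
      = Iset (m' + k) (m' + k + k) 0 hab1 := by
    ext x
    rw [hmem1 x, mem_Iset_d0]
  have hEq2 : insert (0 : Fin (2 ^ (m' + k + k))) (A ∪ C') = Iset m' (m' + k) k hab2 := by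
    ext x
    rw [hmem2 x, mem_Iset]
  have hEqA : insert (0 : Fin (2 ^ (m' + k + k))) A = Iset m' (m' + k + k) 0 hab3 := by
    ext x
    rw [hmemA x, mem_Iset_d0]
  have hEq3 : (insert (0 : Fin (2 ^ (m' + k + k))) (A ∪ B))
      ∩ (insert (0 : Fin (2 ^ (m' + k + k))) (A ∪ C'))
      = insert (0 : Fin (2 ^ (m' + k + k))) A := by
    ext x
    rw [Finset.mem_inter, hmem1 x, hmem2 x, hmemA x]
    constructor
    · rintro ⟨h1, h2⟩
      rwa [Nat.mod_eq_of_lt h1] at h2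
    · intro hx
      exact ⟨by omega, by rw [Nat.mod_eq_of_lt (by omega)]; omega⟩
  have hEq3' : (insert (0 : Fin (2 ^ (m' + k + k))) (A ∪ B))
      ∩ (insert (0 : Fin (2 ^ (m' + k + k))) (A ∪ C'))
      = Iset m' (m' + k + k) 0 hab3 := hEq3.trans hEqA
  have hI : (insert (0 : Fin (2 ^ (m' + k + k))) (A ∪ B)).card = 2 ^ (m' + k) := by
    rw [hEq1, card_Iset]
    norm_num
  have hI' : (insert (0 : Fin (2 ^ (m' + k + k))) (A ∪ C')).card = 2 ^ (m' + k) := by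
    rw [hEq2, card_Iset]
  have hT : ((insert (0 : Fin (2 ^ (m' + k + k))) (A ∪ B))
      ∩ (insert (0 : Fin (2 ^ (m' + k + k))) (A ∪ C'))).card = 2 ^ m' := by
    rw [hEq3', card_Iset]
    norm_num
  refine ⟨A, B, C', hI, hI', hT, hmem1, ?_, ?_, hEq3, ?_, ?_, ?_⟩
  · exact punct_RM r (m' + k) (m' + k + k) 0 hab1 _ hEq1 hI
  · exact punct_RM r m' (m' + k) k hab2 _ hEq2 hI'
  · exact punct_RM r m' (m' + k + k) 0 hab3 _ hEq3' hT
  · exact map_uniform_RM r (m' + k) (m' + k + k) 0 hab1 _ hEq1 hI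
  · exact map_uniform_RM r m' (m' + k) k hab2 _ hEq2 hI'
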